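/- Define α_j = (1/(2 n^{k/2}))·max((n/p)^{k/(k+1)} − j/p, 0) for a constant integer k ≥ 2 and positive integers n, p with p ≤ n and n sufficiently large. Then for every s ≥ 0 and every J with 1 ≤ |J| ≤ p: ∑_{ℓ=0}^{k−1} binom(s+|J|, ℓ)·(α_s − α_{s+|J|})² + |J|·binom(s+|J|−1, k−1)·α_s² ≤ 1. -/

import Mathlib

/-- The dual learning-graph solution for `k`-sum:
`α_j = (1/(2 n^{k/2})) · max((n/p)^{k/(k+1)} − j/p, 0)`. -/
noncomputable def alphaKS (k n p : ℕ) (j : ℕ) : ℝ :=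
  (1 / (2 * (n : ℝ) ^ ((k : ℝ) / 2))) *
    max (((n : ℝ) / p) ^ ((k : ℝ) / ((k : ℝ) + 1)) - (j : ℝ) / p) 0

private lemma two_pow_le_two_mul_factorial (m : ℕ) : 2 ^ m ≤ 2 * (Nat.factorial m) := by
  induction m with
  | zero => norm_num
  | succ m ih =>
    rw [pow_succ, Nat.factorial_succ]
    rcases Nat.eq_zero_or_pos m with rfl | hm
    · norm_num [Nat.factorial]
    · nlinarith [Nat.one_le_iff_ne_zero.2 m.factorial_ne_zero]

/-- Feasibility of the dual solution for the `Ω((n/p)^{k/(k+1)})` parallel lower bound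
for the `k`-sum problem (for `n` sufficiently large); `t = |J|`. -/
theorem stmt_15 (k : ℕ) (hk : 2 ≤ k) :
    ∃ N : ℕ, ∀ n p : ℕ, N ≤ n → 1 ≤ p → p ≤ n →
      ∀ s t : ℕ, 1 ≤ t → t ≤ p →
        (∑ ℓ ∈ Finset.range k, ((s + t).choose ℓ : ℝ)) *
            (alphaKS k n p s - alphaKS k n p (s + t)) ^ 2 +
          (t : ℝ) * ((s + t - 1).choose (k - 1) : ℝ) * (alphaKS k n p s) ^ 2 ≤ 1 := by
  refine ⟨k * 2 ^ k, ?_⟩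
  intro n p hn hp hpn s t ht htp
  have hn1 : 1 ≤ n := by
    refine le_trans ?_ hn
    have h2 : 1 ≤ 2 ^ k := Nat.one_le_two_pow
    calc 1 ≤ 2 ^ k := h2
      _ ≤ k * 2 ^ k := Nat.le_mul_of_pos_left _ (by omega)
  have hNr : (0:ℝ) < n := by exact_mod_cast hn1
  have hP : (0:ℝ) < p := by exact_mod_cast hp
  have hPN : (p:ℝ) ≤ n := by exact_mod_cast hpn
  have hbase : (1:ℝ) ≤ (n:ℝ) / p := (one_le_div hP).2 hPN
  have hkR : (2:ℝ) ≤ (k:ℝ) := by exact_mod_cast hk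
  have he0 : (0:ℝ) ≤ (k:ℝ) / ((k:ℝ) + 1) := by positivity
  have he1 : (k:ℝ) / ((k:ℝ) + 1) ≤ 1 := by
    rw [div_le_one (by linarith)]; linarith
  set A : ℝ := ((n:ℝ) / p) ^ ((k:ℝ) / ((k:ℝ) + 1)) with hAdef
  have hA0 : 0 ≤ A := Real.rpow_nonneg (by positivity) _
  have hA1 : 1 ≤ A := by
    calc (1:ℝ) = ((n:ℝ)/p) ^ (0:ℝ) := (Real.rpow_zero _).symm
      _ ≤ A := Real.rpow_le_rpow_of_exponent_le hbase he0
  have hAle : A ≤ (n:ℝ) / p := by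
    calc A ≤ ((n:ℝ)/p) ^ (1:ℝ) := Real.rpow_le_rpow_of_exponent_le hbase he1
      _ = (n:ℝ)/p := Real.rpow_one _
  set X : ℝ := (n:ℝ) ^ ((k:ℝ) / 2) with hXdef
  have hX : 0 < X := Real.rpow_pos_of_pos hNr _
  set c : ℝ := 1 / (2 * X) with hcdef
  have hc : 0 < c := by positivity
  have hX2 : X ^ 2 = (n:ℝ) ^ k := by
    rw [hXdef, ← Real.rpow_natCast ((n:ℝ) ^ ((k:ℝ)/2)) 2, ← Real.rpow_mul hNr.le,
      ← Real.rpow_natCast (n:ℝ) k]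
    norm_num
  have hc2 : c ^ 2 = 1 / (4 * (n:ℝ) ^ k) := by
    rw [hcdef, div_pow, mul_pow, hX2]; norm_num
  have hidA : A ^ (k + 1) = ((n:ℝ) / p) ^ k := by
    rw [hAdef, ← Real.rpow_natCast (((n:ℝ)/p) ^ ((k:ℝ)/((k:ℝ)+1))) (k+1),
      ← Real.rpow_mul (by positivity), ← Real.rpow_natCast ((n:ℝ)/p) k]
    congr 1
    push_cast
    field_simp
  have hPA : (p:ℝ) ^ k * A ^ (k + 1) = (n:ℝ) ^ k := by
    rw [hidA, ← mul_pow]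
    congr 1
    field_simp
  simp only [alphaKS]
  rw [← hAdef, ← hXdef, ← hcdef]
  push_cast
  by_cases hcase : A - (s:ℝ)/p ≤ 0
  · have h1 : max (A - (s:ℝ)/p) 0 = 0 := max_eq_right hcase
    have h2 : max (A - ((s:ℝ) + t)/p) 0 = 0 := by
      apply max_eq_right
      rw [add_div]
      have htp0 : (0:ℝ) ≤ (t:ℝ)/p := by positivity
      linarith
    rw [h1, h2]
    norm_num
  · push_neg at hcase
    have hmax : max (A - (s:ℝ)/p) 0 = A - (s:ℝ)/p := max_eq_left hcase.le
    have hsA : (s:ℝ) < A * p := by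
      have h' : (s:ℝ)/p < A := by linarith
      exact (div_lt_iff₀ hP).1 h'
    have hsn : s ≤ n := by
      have h2 : (s:ℝ) < (n:ℝ) := by
        calc (s:ℝ) < A * p := hsA
          _ ≤ ((n:ℝ)/p) * p := mul_le_mul_of_nonneg_right hAle hP.le
          _ = n := by field_simp
      exact_mod_cast h2.le
    have htn : t ≤ n := le_trans htp hpn
    have hkm : k - 1 + 1 = k := by omega
    -- sum bound
    have hsumN : (∑ ℓ ∈ Finset.range k, (s + t).choose ℓ) ≤ k * (2*n)^(k-1) := by
      calc ∑ ℓ ∈ Finset.range k, (s+t).choose ℓ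
          ≤ ∑ _ℓ ∈ Finset.range k, (2*n)^(k-1) := by
            apply Finset.sum_le_sum
            intro ℓ hℓ
            have hℓk : ℓ ≤ k - 1 := by have := Finset.mem_range.1 hℓ; omega
            calc (s+t).choose ℓ ≤ (s+t)^ℓ := Nat.choose_le_pow _ _
              _ ≤ (2*n)^ℓ := Nat.pow_le_pow_left (by omega) _
              _ ≤ (2*n)^(k-1) := Nat.pow_le_pow_right (by omega) hℓk
        _ = k * (2*n)^(k-1) := by rw [Finset.sum_const, Finset.card_range, smul_eq_mul]
    have hsumR : (∑ ℓ ∈ Finset.range k, ((s + t).choose ℓ : ℝ)) ≤ (k:ℝ) * (2*(n:ℝ))^(k-1) := by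
      rw [← Nat.cast_sum]
      exact_mod_cast hsumN
    -- difference bound
    have hbmax : (A - ((s:ℝ)+t)/p) ≤ max (A - ((s:ℝ)+t)/p) 0 := le_max_left _ _
    have h0max : (0:ℝ) ≤ max (A - ((s:ℝ)+t)/p) 0 := le_max_right _ _
    have hmono : max (A - ((s:ℝ)+t)/p) 0 ≤ A - (s:ℝ)/p := by
      apply max_le ?_ hcase.le
      have : (0:ℝ) ≤ (t:ℝ)/p := by positivity
      rw [add_div]
      linarith
    have htp1 : (t:ℝ)/p ≤ 1 := by
      rw [div_le_one hP]
      exact_mod_cast htp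
    have hdle : c * max (A - (s:ℝ)/p) 0 - c * max (A - ((s:ℝ)+t)/p) 0 ≤ c := by
      rw [hmax, ← mul_sub]
      have key : A - (s:ℝ)/p - max (A - ((s:ℝ)+t)/p) 0 ≤ 1 := by
        have hsplit : ((s:ℝ)+t)/p = (s:ℝ)/p + (t:ℝ)/p := add_div _ _ _
        linarith [hbmax, htp1]
      calc c * (A - (s:ℝ)/p - max (A - ((s:ℝ)+t)/p) 0) ≤ c * 1 :=
            mul_le_mul_of_nonneg_left key hc.le
        _ = c := mul_one c
    have hd0 : 0 ≤ c * max (A - (s:ℝ)/p) 0 - c * max (A - ((s:ℝ)+t)/p) 0 := by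
      rw [hmax, ← mul_sub]
      exact mul_nonneg hc.le (by linarith [hmono])
    have hdsq : (c * max (A - (s:ℝ)/p) 0 - c * max (A - ((s:ℝ)+t)/p) 0) ^ 2 ≤ c ^ 2 :=
      pow_le_pow_left₀ hd0 hdle 2
    have hNk : (n:ℝ)^k = (n:ℝ) * (n:ℝ)^(k-1) := by
      rw [← pow_succ', hkm]
    have h1 : (∑ ℓ ∈ Finset.range k, ((s + t).choose ℓ : ℝ)) *
        (c * max (A - (s:ℝ)/p) 0 - c * max (A - ((s:ℝ)+t)/p) 0) ^ 2 ≤ 1/2 := by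
      have hsum0 : (0:ℝ) ≤ ∑ ℓ ∈ Finset.range k, ((s + t).choose ℓ : ℝ) :=
        Finset.sum_nonneg fun _ _ => Nat.cast_nonneg _
      calc (∑ ℓ ∈ Finset.range k, ((s + t).choose ℓ : ℝ)) *
            (c * max (A - (s:ℝ)/p) 0 - c * max (A - ((s:ℝ)+t)/p) 0) ^ 2
          ≤ ((k:ℝ) * (2*(n:ℝ))^(k-1)) * c^2 :=
            mul_le_mul hsumR hdsq (by positivity) (by positivity)
        _ = (k:ℝ)*2^(k-1) * ((n:ℝ)^(k-1) * (1/(4*((n:ℝ)*(n:ℝ)^(k-1))))) := by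
            rw [hc2, mul_pow, hNk]; ring
        _ = (k:ℝ)*2^(k-1) * (1/(4*(n:ℝ))) := by
            congr 1
            have hnk1 : (0:ℝ) < (n:ℝ)^(k-1) := by positivity
            field_simp
        _ ≤ 1/2 := by
            rw [mul_one_div, div_le_div_iff₀ (by positivity) (by norm_num)]
            have hbig : (k:ℝ)*2^k ≤ (n:ℝ) := by exact_mod_cast hn
            have he : (k:ℝ)*2^(k-1)*2 = (k:ℝ)*2^k := by
              rw [mul_assoc, ← pow_succ, hkm]
            linarith
    -- second term
    have htleP : (t:ℝ) ≤ (p:ℝ) := by exact_mod_cast htp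
    have hstPA : ((s + t - 1 : ℕ) : ℝ) ≤ 2 * (p:ℝ) * A := by
      have h1' : ((s+t-1:ℕ):ℝ) ≤ ((s+t:ℕ):ℝ) := by exact_mod_cast Nat.sub_le _ _
      push_cast at h1'
      have hsPA : (s:ℝ) ≤ (p:ℝ) * A := by
        have h'' := hsA
        rw [mul_comm] at h''
        exact h''.le
      have htPA : (t:ℝ) ≤ (p:ℝ) * A :=
        le_trans htleP (le_mul_of_one_le_right hP.le hA1)
      linarith
    have hChd : ((s + t - 1).choose (k-1) : ℝ) ≤ (2*(p:ℝ)*A)^(k-1) / ((Nat.factorial (k-1)) : ℝ) := by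
      calc ((s + t - 1).choose (k-1) : ℝ) ≤ (((s+t-1:ℕ):ℝ))^(k-1) / ((Nat.factorial (k-1)) : ℝ) :=
            Nat.choose_le_pow_div _ _
        _ ≤ (2*(p:ℝ)*A)^(k-1) / ((Nat.factorial (k-1)) : ℝ) := by
            gcongr
    have hαle : c * max (A - (s:ℝ)/p) 0 ≤ c * A := by
      rw [hmax]
      have hs0 : (0:ℝ) ≤ (s:ℝ)/p := by positivity
      exact mul_le_mul_of_nonneg_left (by linarith) hc.le
    have hα0 : (0:ℝ) ≤ c * max (A - (s:ℝ)/p) 0 := by positivity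
    have h2 : (t:ℝ) * ((s + t - 1).choose (k - 1) : ℝ) *
        (c * max (A - (s:ℝ)/p) 0) ^ 2 ≤ 1/2 := by
      calc (t:ℝ) * ((s + t - 1).choose (k - 1) : ℝ) * (c * max (A - (s:ℝ)/p) 0) ^ 2
          ≤ (p:ℝ) * ((2*(p:ℝ)*A)^(k-1) / ((Nat.factorial (k-1)) : ℝ)) * (c*A)^2 := by
            apply mul_le_mul (mul_le_mul htleP hChd (Nat.cast_nonneg _) hP.le)
              (pow_le_pow_left₀ hα0 hαle 2) (by positivity) (by positivity)
        _ = 2^(k-1) * ((p:ℝ)^k * A^(k+1)) * c^2 / ((Nat.factorial (k-1)) : ℝ) := by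
            have e1 : (p:ℝ) * (p:ℝ)^(k-1) = (p:ℝ)^k := by rw [← pow_succ', hkm]
            have e2 : A^(k-1) * A^2 = A^(k+1) := by
              rw [← pow_add]
              congr 1
              omega
            rw [← e1, ← e2, mul_pow, mul_pow, mul_pow]
            ring
        _ = 2^(k-1) * (n:ℝ)^k * (1/(4*(n:ℝ)^k)) / ((Nat.factorial (k-1)) : ℝ) := by rw [hPA, hc2]
        _ = 2^(k-1) / (4 * ((Nat.factorial (k-1)) : ℝ)) := by
            have hnk : ((n:ℝ))^k ≠ 0 := by positivity
            have hf : ((Nat.factorial (k-1)) : ℝ) ≠ 0 := by positivity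
            field_simp
        _ ≤ 1/2 := by
            rw [div_le_div_iff₀ (by positivity) (by norm_num)]
            have hR : (2:ℝ)^(k-1) ≤ 2 * ((Nat.factorial (k-1)) : ℝ) := by
              exact_mod_cast two_pow_le_two_mul_factorial (k-1)
            linarith
    linarith
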